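/- If A, B are bounded operators on a Hilbert space such that [A,B] = AB − BA is trace class, then [[A,B],B] has trace zero. -/

import Mathlib

open MeasureTheory

variable {H : Type} [NormedAddCommGroup H] [InnerProductSpace ℂ H]

/-- A bounded operator is trace class when its diagonal is absolutely summable
in every Hilbert basis. -/
def IsTraceClass (T : H →L[ℂ] H) : Prop :=
  ∀ (ι : Type) (e : HilbertBasis ι ℂ H),
    Summable fun i => ‖(inner ℂ (e i) (T (e i)) : ℂ)‖

section Aux

set_option maxHeartbeats 1000000
set_option synthInstance.maxHeartbeats 400000

open scoped ENNReal NNReal ComplexConjugate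

local notation "⟪" x ", " y "⟫" => (inner ℂ x y : ℂ)

variable [CompleteSpace H]

open ContinuousLinearMap in
/-- Real Parseval identity for squared norms of coefficients. -/
lemma parseval_sq {ι : Type} (e : HilbertBasis ι ℂ H) (x : H) :
    HasSum (fun i => ‖⟪e i, x⟫‖ ^ 2) (‖x‖ ^ 2) := by
  have h := e.hasSum_inner_mul_inner x x
  have h2 : ∀ i, ⟪x, e i⟫ * ⟪e i, x⟫ = ((‖⟪e i, x⟫‖ ^ 2 : ℝ) : ℂ) := by
    intro i
    rw [← inner_conj_symm x (e i), RCLike.conj_mul]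
    norm_cast
  have h3 : ⟪x, x⟫ = ((‖x‖ ^ 2 : ℝ) : ℂ) := by
    rw [inner_self_eq_norm_sq_to_K]
    norm_cast
  rw [h3] at h
  simp only [h2] at h
  exact Complex.hasSum_ofReal.mp h

/-- `ℝ≥0∞`-valued Parseval. -/
lemma parseval_sq_ennreal {ι : Type} (e : HilbertBasis ι ℂ H) (x : H) :
    ∑' i, ((‖⟪e i, x⟫‖₊ : ℝ≥0∞) ^ 2) = (‖x‖₊ : ℝ≥0∞) ^ 2 := by
  have h : HasSum (fun i => ‖⟪e i, x⟫‖₊ ^ 2) (‖x‖₊ ^ 2) := by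
    rw [← NNReal.hasSum_coe]
    push_cast
    exact parseval_sq e x
  calc ∑' i, ((‖⟪e i, x⟫‖₊ : ℝ≥0∞) ^ 2)
      = ∑' i, ((‖⟪e i, x⟫‖₊ ^ 2 : ℝ≥0) : ℝ≥0∞) := by push_cast; rfl
    _ = ((‖x‖₊ ^ 2 : ℝ≥0) : ℝ≥0∞) := ENNReal.tsum_coe_eq h
    _ = (‖x‖₊ : ℝ≥0∞) ^ 2 := by push_cast; rfl

/-- The (possibly infinite) Hilbert–Schmidt norm squared of an operator w.r.t. a basis. -/
noncomputable def hsSum (X : H →L[ℂ] H) {ι : Type} (e : HilbertBasis ι ℂ H) : ℝ≥0∞ :=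
  ∑' i, (‖X (e i)‖₊ : ℝ≥0∞) ^ 2

open ContinuousLinearMap in
lemma hsSum_adjoint_eq {ι κ : Type} (e : HilbertBasis ι ℂ H) (f : HilbertBasis κ ℂ H)
    (X : H →L[ℂ] H) : hsSum X e = hsSum (adjoint X) f := by
  have key : ∀ i j, (‖⟪f j, X (e i)⟫‖₊ : ℝ≥0∞) = (‖⟪e i, adjoint X (f j)⟫‖₊ : ℝ≥0∞) := by
    intro i j
    have h1 : ⟪e i, adjoint X (f j)⟫ = starRingEnd ℂ ⟪f j, X (e i)⟫ := by
      rw [← inner_conj_symm (e i) (adjoint X (f j)), adjoint_inner_left]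
    rw [h1, RCLike.nnnorm_conj]
  calc hsSum X e
      = ∑' i, ∑' j, (‖⟪f j, X (e i)⟫‖₊ : ℝ≥0∞) ^ 2 := by
        refine tsum_congr fun i => ?_
        rw [parseval_sq_ennreal f (X (e i))]
    _ = ∑' j, ∑' i, (‖⟪f j, X (e i)⟫‖₊ : ℝ≥0∞) ^ 2 := ENNReal.tsum_comm
    _ = ∑' j, ∑' i, (‖⟪e i, adjoint X (f j)⟫‖₊ : ℝ≥0∞) ^ 2 := by
        refine tsum_congr fun j => tsum_congr fun i => ?_
        rw [key]
    _ = hsSum (adjoint X) f := by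
        refine tsum_congr fun j => ?_
        rw [parseval_sq_ennreal e (adjoint X (f j))]

open ContinuousLinearMap in
lemma hsSum_basis_indep {ι κ : Type} (e : HilbertBasis ι ℂ H) (f : HilbertBasis κ ℂ H)
    (X : H →L[ℂ] H) : hsSum X e = hsSum X f := by
  rw [hsSum_adjoint_eq e f X, hsSum_adjoint_eq f f (adjoint X), adjoint_adjoint]

lemma hsSum_eq {ι : Type} (e : HilbertBasis ι ℂ H) (X : H →L[ℂ] H) :
    hsSum X e = ∑' i, ((‖X (e i)‖₊ ^ 2 : ℝ≥0) : ℝ≥0∞) := by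
  refine tsum_congr fun i => ?_
  rw [ENNReal.coe_pow]

lemma hsSum_summable {ι : Type} {e : HilbertBasis ι ℂ H} {X : H →L[ℂ] H}
    (hX : hsSum X e ≠ ⊤) : Summable (fun i => ‖X (e i)‖ ^ 2) := by
  rw [hsSum_eq] at hX
  have h2 := NNReal.summable_coe.mpr (ENNReal.tsum_coe_ne_top_iff_summable.mp hX)
  refine h2.congr fun i => ?_
  push_cast
  rfl

lemma hsSum_of_summable {ι : Type} {e : HilbertBasis ι ℂ H} {X : H →L[ℂ] H}
    (h : Summable (fun i => ‖X (e i)‖ ^ 2)) : hsSum X e ≠ ⊤ := by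
  rw [hsSum_eq]
  refine ENNReal.tsum_coe_ne_top_iff_summable.mpr ?_
  rw [← NNReal.summable_coe]
  refine h.congr fun i => ?_
  push_cast
  rfl

open ContinuousLinearMap in
lemma hsSum_mul_left {ι : Type} (e : HilbertBasis ι ℂ H) (B X : H →L[ℂ] H)
    (hX : hsSum X e ≠ ⊤) : hsSum (B * X) e ≠ ⊤ := by
  have hle : hsSum (B * X) e ≤ (‖B‖₊ : ℝ≥0∞) ^ 2 * hsSum X e := by
    rw [hsSum, hsSum, ← ENNReal.tsum_mul_left]
    refine ENNReal.tsum_le_tsum fun i => ?_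
    have h1 : ‖(B * X) (e i)‖₊ ≤ ‖B‖₊ * ‖X (e i)‖₊ := by
      rw [ContinuousLinearMap.mul_apply]
      exact le_opNNNorm B (X (e i))
    calc (‖(B * X) (e i)‖₊ : ℝ≥0∞) ^ 2 ≤ ((‖B‖₊ * ‖X (e i)‖₊ : ℝ≥0) : ℝ≥0∞) ^ 2 := by
          have h2 : ((‖(B * X) (e i)‖₊ : ℝ≥0) : ℝ≥0∞) ≤ ((‖B‖₊ * ‖X (e i)‖₊ : ℝ≥0) : ℝ≥0∞) :=
            ENNReal.coe_le_coe.mpr h1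
          exact pow_le_pow_left' h2 2
      _ = (‖B‖₊ : ℝ≥0∞) ^ 2 * (‖X (e i)‖₊ : ℝ≥0∞) ^ 2 := by push_cast; ring
  exact ne_top_of_le_ne_top (ENNReal.mul_ne_top (by simp) hX) hle

open ContinuousLinearMap in
lemma hsSum_mul_right {ι : Type} (e : HilbertBasis ι ℂ H) (X B : H →L[ℂ] H)
    (hX : hsSum X e ≠ ⊤) : hsSum (X * B) e ≠ ⊤ := by
  have hadj : adjoint (X * B) = adjoint B * adjoint X := by
    rw [← star_eq_adjoint, star_mul, star_eq_adjoint, star_eq_adjoint]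
  rw [hsSum_adjoint_eq e e (X * B), hadj]
  refine hsSum_mul_left e (adjoint B) (adjoint X) ?_
  rw [← hsSum_adjoint_eq e e X]
  exact hX

open ContinuousLinearMap in
/-- The key Fubini lemma: for Hilbert–Schmidt `X`, `Y`, the diagonals of `X*Y` and of
`Y*X` are summable with the same sum. -/
lemma diag_mul_comm {ι : Type} (e : HilbertBasis ι ℂ H) (X Y : H →L[ℂ] H)
    (hX : hsSum X e ≠ ⊤) (hY : hsSum Y e ≠ ⊤) :
    ∃ s : ℂ, HasSum (fun i => ⟪e i, (X * Y) (e i)⟫) s ∧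
      HasSum (fun i => ⟪e i, (Y * X) (e i)⟫) s := by
  have hX' : hsSum (adjoint X) e ≠ ⊤ := by rw [← hsSum_adjoint_eq e e X]; exact hX
  set F : ι × ι → ℂ := fun p => ⟪adjoint X (e p.1), e p.2⟫ * ⟪e p.2, Y (e p.1)⟫ with hF
  -- summability of the X-part squares
  have h1 : Summable (fun p : ι × ι => ‖⟪adjoint X (e p.1), e p.2⟫‖ ^ 2) := by
    rw [summable_prod_of_nonneg (fun p => sq_nonneg _)]
    constructor
    · intro i
      have := (parseval_sq e (adjoint X (e i))).summable
      refine this.congr fun j => ?_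
      rw [norm_inner_symm]
    · refine (hsSum_summable hX').congr fun i => ?_
      have h := parseval_sq e (adjoint X (e i))
      have h' : HasSum (fun j => ‖⟪adjoint X (e i), e j⟫‖ ^ 2) (‖adjoint X (e i)‖ ^ 2) := by
        refine h.congr_fun fun j => ?_
        rw [norm_inner_symm]
      rw [h'.tsum_eq]
  have h2 : Summable (fun p : ι × ι => ‖⟪e p.2, Y (e p.1)⟫‖ ^ 2) := by
    rw [summable_prod_of_nonneg (fun p => sq_nonneg _)]
    refine ⟨fun i => (parseval_sq e (Y (e i))).summable, ?_⟩
    refine (hsSum_summable hY).congr fun i => ?_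
    rw [(parseval_sq e (Y (e i))).tsum_eq]
  -- absolute summability of F
  have hFnorm : Summable (fun p => ‖F p‖) := by
    refine Summable.of_nonneg_of_le (fun p => norm_nonneg _)
      (fun p => ?_) (h1.add h2)
    rw [hF]
    simp only [norm_mul]
    set a := ‖⟪adjoint X (e p.1), e p.2⟫‖
    set b := ‖⟪e p.2, Y (e p.1)⟫‖
    have ha : 0 ≤ a := norm_nonneg _
    have hb : 0 ≤ b := norm_nonneg _
    nlinarith [sq_nonneg (a - b)]
  have hFsum : Summable F := hFnorm.of_norm
  set S : ℂ := ∑' p, F p with hS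
  have hFhas : HasSum F S := hFsum.hasSum
  -- fiberwise sums
  have rows : ∀ i, HasSum (fun j => F (i, j)) ⟪e i, (X * Y) (e i)⟫ := by
    intro i
    have h := e.hasSum_inner_mul_inner (adjoint X (e i)) (Y (e i))
    have hval : ⟪adjoint X (e i), Y (e i)⟫ = ⟪e i, (X * Y) (e i)⟫ := by
      rw [adjoint_inner_left, ContinuousLinearMap.mul_apply]
    rw [hval] at h
    exact h
  have first : HasSum (fun i => ⟪e i, (X * Y) (e i)⟫) S := hFhas.prod_fiberwise rows
  -- swapped
  have hswap : HasSum (fun p : ι × ι => F (p.2, p.1)) S := by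
    have := (Equiv.prodComm ι ι).hasSum_iff (f := F) (a := S)
    exact this.mpr hFhas
  have rows' : ∀ i, HasSum (fun j => F (j, i)) ⟪e i, (Y * X) (e i)⟫ := by
    intro i
    have h := e.hasSum_inner_mul_inner (adjoint Y (e i)) (X (e i))
    have hval : ⟪adjoint Y (e i), X (e i)⟫ = ⟪e i, (Y * X) (e i)⟫ := by
      rw [adjoint_inner_left, ContinuousLinearMap.mul_apply]
    rw [hval] at h
    refine h.congr_fun fun j => ?_
    rw [hF]
    simp only
    rw [adjoint_inner_left, adjoint_inner_left, mul_comm]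
  have second : HasSum (fun i => ⟪e i, (Y * X) (e i)⟫) S := hswap.prod_fiberwise rows'
  exact ⟨S, first, second⟩

open ContinuousLinearMap in
/-- Commutator of a square of a Hilbert–Schmidt operator with any bounded operator has
zero diagonal sum. -/
lemma pos_commutator {ι : Type} (e : HilbertBasis ι ℂ H) (X B : H →L[ℂ] H)
    (hX : hsSum X e ≠ ⊤) :
    HasSum (fun i => ⟪e i, (X * X * B - B * (X * X)) (e i)⟫) 0 := by
  obtain ⟨s, h1, h2⟩ := diag_mul_comm e X (X * B) hX (hsSum_mul_right e X B hX)
  obtain ⟨t, h3, h4⟩ := diag_mul_comm e (B * X) X (hsSum_mul_left e B X hX) hX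
  have hst : s = t := by
    have h4' : HasSum (fun i => ⟪e i, (X * B * X) (e i)⟫) t := by
      rw [show X * (B * X) = X * B * X from (mul_assoc X B X).symm] at h4
      exact h4
    exact h2.unique h4'
  have h1' : HasSum (fun i => ⟪e i, (X * X * B) (e i)⟫) s := by
    rw [← mul_assoc] at h1; exact h1
  have h3' : HasSum (fun i => ⟪e i, (B * (X * X)) (e i)⟫) s := by
    rw [hst]
    rw [mul_assoc] at h3
    exact h3
  have := h1'.sub h3'
  rw [sub_self] at this
  refine this.congr_fun fun i => ?_
  rw [ContinuousLinearMap.sub_apply, inner_sub_right]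

open ContinuousLinearMap in
/-- If `S = P - Q` with `P, Q ≥ 0`, `P * Q = 0`, and `S` has absolutely summable diagonal
in every Hilbert basis, then `√P` is Hilbert–Schmidt. -/
lemma sqrt_hs_of_decomp (S P Q : H →L[ℂ] H) (hS : IsTraceClass S)
    (hP : 0 ≤ P) (hQ : 0 ≤ Q) (hPQ : S = P - Q) (hmul : P * Q = 0)
    {ι : Type} (e : HilbertBasis ι ℂ H) : hsSum (CFC.sqrt P) e ≠ ⊤ := by
  classical
  set X := CFC.sqrt P with hXdef
  have hXsa : IsSelfAdjoint X := (CFC.sqrt_nonneg (a := P)).isSelfAdjoint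
  have hXX : X * X = P := CFC.sqrt_mul_sqrt_self _ hP
  have hQsa : IsSelfAdjoint Q := hQ.isSelfAdjoint
  have key : ∀ v : H, ⟪v, P v⟫ = ((‖X v‖ ^ 2 : ℝ) : ℂ) := by
    intro v
    rw [← hXX, ContinuousLinearMap.mul_apply, ← adjoint_inner_left, hXsa.adjoint_eq]
    rw [inner_self_eq_norm_sq_to_K]
    norm_cast
  set N : Submodule ℂ H := LinearMap.ker (P : H →ₗ[ℂ] H) with hNdef
  have hNmem : ∀ x : H, x ∈ N ↔ P x = 0 := fun x => LinearMap.mem_ker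
  have hNc : IsClosed (N : Set H) := isClosed_ker P
  haveI : CompleteSpace N := hNc.completeSpace_coe
  obtain ⟨w₀, b₀, hb₀⟩ := exists_hilbertBasis ℂ N
  set s : Set H := ((↑) : N → H) '' w₀ with hsdef
  have hs_sub : s ⊆ (N : Set H) := by
    rintro _ ⟨x, -, rfl⟩; exact x.2
  have hsON : Orthonormal ℂ ((↑) : s → H) := by
    rw [orthonormal_subtype_iff_ite]
    rintro _ ⟨x, hx, rfl⟩ _ ⟨y, hy, rfl⟩
    have hON := b₀.orthonormal
    rw [hb₀, orthonormal_subtype_iff_ite] at hON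
    have := hON x hx y hy
    rw [Submodule.coe_inner] at this
    rw [this]
    by_cases hxy : x = y
    · simp [hxy]
    · have : (x : H) ≠ (y : H) := fun hc => hxy (Subtype.ext hc)
      simp [hxy, this]
  obtain ⟨w, c, hsw, hc⟩ := hsON.exists_hilbertBasis_extension
  -- N is contained in the closure of the span of s
  have hspan : (N : Set H) ⊆ closure ((Submodule.span ℂ s : Submodule ℂ H) : Set H) := by
    intro u hu
    have h1 : (Submodule.span ℂ (Set.range ⇑b₀)).topologicalClosure = ⊤ := b₀.dense_span
    have h2 : (⟨u, hu⟩ : N) ∈ closure ((Submodule.span ℂ (Set.range ⇑b₀) : Submodule ℂ N) : Set N) := by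
      have : (⟨u, hu⟩ : N) ∈ (Submodule.span ℂ (Set.range ⇑b₀)).topologicalClosure := by
        rw [h1]; trivial
      exact this
    have hcont : Continuous ((↑) : N → H) := continuous_subtype_val
    have h3 : u ∈ closure (((↑) : N → H) '' ((Submodule.span ℂ (Set.range ⇑b₀) : Submodule ℂ N) : Set N)) := by
      have := image_closure_subset_closure_image (f := ((↑) : N → H)) hcont
        (s := ((Submodule.span ℂ (Set.range ⇑b₀) : Submodule ℂ N) : Set N))
      exact this ⟨_, h2, rfl⟩
    refine closure_mono ?_ h3
    intro x hx
    obtain ⟨y, hy, rfl⟩ := hx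
    have hmap : (Submodule.span ℂ (Set.range ⇑b₀)).map N.subtype = Submodule.span ℂ s := by
      rw [Submodule.map_span]
      congr 1
      rw [hb₀, hsdef]
      ext z
      simp [Subtype.range_coe]
    have hz : (y : H) ∈ (Submodule.span ℂ (Set.range ⇑b₀)).map N.subtype :=
      ⟨y, hy, rfl⟩
    rw [hmap] at hz
    exact hz
  -- tail basis vectors are orthogonal to N
  have horth : ∀ v : H, v ∈ w → v ∉ s → ∀ u ∈ N, ⟪u, v⟫ = 0 := by
    intro v hv hvs u hu
    have hperp : ∀ x ∈ s, ⟪x, v⟫ = 0 := by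
      intro x hx
      have hxw : x ∈ w := hsw hx
      have hne : (⟨x, hxw⟩ : w) ≠ (⟨v, hv⟩ : w) := by
        intro hcon
        apply hvs
        have hxv : x = v := by simpa using congrArg Subtype.val hcon
        rwa [hxv] at hx
      have := c.orthonormal.2 hne
      rw [hc] at this
      exact this
    have hsK : s ⊆ ((Submodule.span ℂ {v})ᗮ : Set H) := by
      intro x hx
      rw [SetLike.mem_coe, Submodule.mem_orthogonal_singleton_iff_inner_left]
      exact hperp x hx
    have hKclosed : IsClosed (((Submodule.span ℂ {v})ᗮ : Submodule ℂ H) : Set H) :=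
      Submodule.isClosed_orthogonal _
    have hspanK : (Submodule.span ℂ s : Submodule ℂ H) ≤ (Submodule.span ℂ {v})ᗮ :=
      Submodule.span_le.mpr hsK
    have hu2 : u ∈ ((Submodule.span ℂ {v})ᗮ : Set H) := by
      have h4 : closure ((Submodule.span ℂ s : Submodule ℂ H) : Set H) ⊆
          ((Submodule.span ℂ {v})ᗮ : Set H) := by
        rw [← hKclosed.closure_eq]
        exact closure_mono hspanK
      exact h4 (hspan hu)
    rw [SetLike.mem_coe, Submodule.mem_orthogonal_singleton_iff_inner_right] at hu2
    rw [← inner_conj_symm u v, hu2]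
    simp
  -- Q kills tail vectors
  have hrange : ∀ x : H, Q x ∈ N := by
    intro x
    refine (hNmem _).mpr ?_
    calc P (Q x) = (P * Q) x := by rw [ContinuousLinearMap.mul_apply]
      _ = (0 : H →L[ℂ] H) x := by rw [hmul]
      _ = 0 := rfl
  have hkill : ∀ v : H, v ∈ w → v ∉ s → Q v = 0 := by
    intro v hv hvs
    have h0 : ⟪Q v, Q v⟫ = 0 := by
      calc ⟪Q v, Q v⟫ = ⟪Q (Q v), v⟫ := by
            rw [← adjoint_inner_left, hQsa.adjoint_eq]
        _ = 0 := horth v hv hvs _ (hrange (Q v))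
    exact inner_self_eq_zero.mp h0
  -- pointwise bound on the adapted basis
  have hbound : ∀ i : w, ‖X ((i : H))‖ ^ 2 ≤ ‖⟪(i : H), S ((i : H))⟫‖ := by
    intro i
    by_cases his : (i : H) ∈ s
    · have hvN : (i : H) ∈ N := hs_sub his
      have h0 : ((‖X ((i : H))‖ ^ 2 : ℝ) : ℂ) = 0 := by
        rw [← key, (hNmem _).mp hvN, inner_zero_right]
      have h1 : ‖X ((i : H))‖ ^ 2 = 0 := by exact_mod_cast h0
      rw [h1]
      exact norm_nonneg _
    · have h1 : Q ((i : H)) = 0 := hkill _ i.2 his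
      have h2 : ⟪(i : H), S ((i : H))⟫ = ((‖X ((i : H))‖ ^ 2 : ℝ) : ℂ) := by
        rw [hPQ, ContinuousLinearMap.sub_apply, inner_sub_right, h1, inner_zero_right,
          sub_zero, key]
      rw [h2]
      rw [Complex.norm_real, Real.norm_eq_abs, abs_of_nonneg (sq_nonneg _)]
  -- summability in the adapted basis
  have hsum := hS w c
  have hsum2 : Summable (fun i : w => ‖X (c i)‖ ^ 2) := by
    refine Summable.of_nonneg_of_le (fun i => sq_nonneg _) (fun i => ?_) hsum
    have hci : c i = (i : H) := by rw [hc]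
    rw [hci]
    exact hbound i
  have hfin : hsSum X c ≠ ⊤ := hsSum_of_summable hsum2
  rw [hsSum_adjoint_eq e c X, hXsa.adjoint_eq]
  exact hfin

open ContinuousLinearMap in
/-- Commutator of a trace-class selfadjoint operator with any bounded operator has
zero diagonal sum. -/
lemma sa_commutator (S B : H →L[ℂ] H) (hSa : IsSelfAdjoint S) (hS : IsTraceClass S)
    {ι : Type} (e : HilbertBasis ι ℂ H) :
    HasSum (fun i => ⟪e i, (S * B - B * S) (e i)⟫) 0 := by
  have hTCneg : IsTraceClass (-S) := by
    intro κ f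
    refine (hS κ f).congr fun i => ?_
    rw [ContinuousLinearMap.neg_apply, inner_neg_right, norm_neg]
  set P : H →L[ℂ] H := S⁺ with hPdef
  set Q : H →L[ℂ] H := S⁻ with hQdef
  have hPn : 0 ≤ P := CFC.posPart_nonneg S
  have hQn : 0 ≤ Q := CFC.negPart_nonneg S
  have hdecomp : S = P - Q := (CFC.posPart_sub_negPart S hSa).symm
  have hmulPQ : P * Q = 0 := CFC.posPart_mul_negPart S
  have hmulQP : Q * P = 0 := CFC.negPart_mul_posPart S
  have hdecomp' : (-S) = Q - P := by rw [hdecomp, neg_sub]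
  have hX1 : hsSum (CFC.sqrt P) e ≠ ⊤ :=
    sqrt_hs_of_decomp S P Q hS hPn hQn hdecomp hmulPQ e
  have hX2 : hsSum (CFC.sqrt Q) e ≠ ⊤ :=
    sqrt_hs_of_decomp (-S) Q P hTCneg hQn hPn hdecomp' hmulQP e
  have h1 := pos_commutator e (CFC.sqrt P) B hX1
  have h2 := pos_commutator e (CFC.sqrt Q) B hX2
  rw [CFC.sqrt_mul_sqrt_self _ hPn] at h1
  rw [CFC.sqrt_mul_sqrt_self _ hQn] at h2
  have h3 := h1.sub h2
  rw [sub_self] at h3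
  have hop : (P * B - B * P) - (Q * B - B * Q) = S * B - B * S := by
    rw [hdecomp]
    noncomm_ring
  refine h3.congr_fun fun i => ?_
  rw [← hop]
  rw [ContinuousLinearMap.sub_apply, inner_sub_right]

end Aux

/-- If `[A,B]` is trace class then `[[A,B],B]` has trace zero: in every Hilbert
basis, the diagonal of `[[A,B],B]` sums to `0`. -/
theorem trace_double_commutator_eq_zero [CompleteSpace H]
    (A B : H →L[ℂ] H) (h : IsTraceClass (A * B - B * A)) :
    ∀ (ι : Type) (e : HilbertBasis ι ℂ H),
      HasSum
        (fun i => (inner ℂ (e i)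
          (((A * B - B * A) * B - B * (A * B - B * A)) (e i)) : ℂ)) 0 := by
  intro ι e
  set D : H →L[ℂ] H := A * B - B * A with hD
  set S₁ : H →L[ℂ] H := (2⁻¹ : ℂ) • (D + star D) with hS₁
  set S₂ : H →L[ℂ] H := ((2⁻¹ : ℂ) * Complex.I) • (star D - D) with hS₂
  have hS₁a : IsSelfAdjoint S₁ := by
    rw [IsSelfAdjoint, hS₁, star_smul, star_add, star_star]
    rw [show star (2⁻¹ : ℂ) = (2⁻¹ : ℂ) by simp]
    rw [add_comm]
  have hS₂a : IsSelfAdjoint S₂ := by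
    rw [IsSelfAdjoint, hS₂, star_smul, star_sub, star_star]
    rw [show star ((2⁻¹ : ℂ) * Complex.I) = -((2⁻¹ : ℂ) * Complex.I) by
      simp [Complex.ext_iff]]
    rw [neg_smul, ← smul_neg, neg_sub]
  have hdiag : ∀ (v : H), (inner ℂ v (star D v) : ℂ) = starRingEnd ℂ (inner ℂ v (D v) : ℂ) := by
    intro v
    rw [ContinuousLinearMap.star_eq_adjoint, ContinuousLinearMap.adjoint_inner_right,
      ← inner_conj_symm]
  have hTC₁ : IsTraceClass S₁ := by
    intro κ f
    refine Summable.of_nonneg_of_le (fun i => norm_nonneg _) (fun i => ?_) (h κ f)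
    rw [hS₁]
    rw [ContinuousLinearMap.smul_apply, inner_smul_right, ContinuousLinearMap.add_apply,
      inner_add_right, hdiag]
    set z := (inner ℂ (f i) (D (f i)) : ℂ)
    calc ‖(2⁻¹ : ℂ) * (z + starRingEnd ℂ z)‖ ≤ ‖(2⁻¹ : ℂ)‖ * (‖z‖ + ‖starRingEnd ℂ z‖) := by
          rw [norm_mul]
          gcongr
          exact norm_add_le _ _
      _ = ‖z‖ := by
          rw [RCLike.norm_conj]
          simp
          ring
  have hTC₂ : IsTraceClass S₂ := by
    intro κ f
    refine Summable.of_nonneg_of_le (fun i => norm_nonneg _) (fun i => ?_) (h κ f)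
    rw [hS₂]
    rw [ContinuousLinearMap.smul_apply, inner_smul_right, ContinuousLinearMap.sub_apply,
      inner_sub_right, hdiag]
    set z := (inner ℂ (f i) (D (f i)) : ℂ)
    calc ‖(2⁻¹ : ℂ) * Complex.I * (starRingEnd ℂ z - z)‖
        ≤ ‖(2⁻¹ : ℂ) * Complex.I‖ * (‖starRingEnd ℂ z‖ + ‖z‖) := by
          rw [norm_mul]
          gcongr
          exact norm_sub_le _ _
      _ = ‖z‖ := by
          rw [RCLike.norm_conj, norm_mul, Complex.norm_I]
          simp
          ring
  have h1 := sa_commutator S₁ B hS₁a hTC₁ e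
  have h2 := sa_commutator S₂ B hS₂a hTC₂ e
  have h2' : HasSum (fun i => Complex.I * (inner ℂ (e i) ((S₂ * B - B * S₂) (e i)) : ℂ)) 0 := by
    have := h2.mul_left Complex.I
    rwa [mul_zero] at this
  have htot := h1.add h2'
  rw [add_zero] at htot
  -- the operator identity
  have hDid : S₁ + Complex.I • S₂ = D := by
    rw [hS₁, hS₂, smul_smul]
    rw [show Complex.I * ((2⁻¹ : ℂ) * Complex.I) = -(2⁻¹ : ℂ) by
      rw [show Complex.I * ((2⁻¹ : ℂ) * Complex.I) = (2⁻¹ : ℂ) * (Complex.I * Complex.I) by ring,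
        Complex.I_mul_I]; ring]
    module
  have hop : D * B - B * D = (S₁ * B - B * S₁) + Complex.I • (S₂ * B - B * S₂) := by
    rw [← hDid]
    simp only [add_mul, mul_add, smul_mul_assoc, mul_smul_comm, smul_sub]
    abel
  have hgoal : HasSum (fun i => (inner ℂ (e i) ((D * B - B * D) (e i)) : ℂ)) 0 := by
    refine htot.congr_fun fun i => ?_
    rw [hop]
    rw [ContinuousLinearMap.add_apply, inner_add_right, ContinuousLinearMap.smul_apply,
      inner_smul_right]
  exact hgoal
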